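/- Partition the expected Fisher information matrix of the rank-one PCP model as I(θ) = [[I_F, I_{F,N}ᵀ],[I_{F,N}, I_N]], where I_F is the principal submatrix on the retained indices (all coordinates of a_1 and all but the first coordinate of each a_p, p ∈ {2,…,P}), I_{F,N} is the (P−1) × r block formed by the deleted rows restricted to the retained columns, and I_N is the (P−1) × (P−1) principal block on the deleted indices. Then the Schur complement vanishes: I_N − I_{F,N} I_F^{−1} I_{F,N}ᵀ = 0; consequently I(θ) H = 0 for the (r+P−1) × (P−1) matrix H = [−I_F^{−1} I_{F,N}ᵀ; Id_{P−1}], whose P − 1 columns are linearly independent and form a basis of the null space of I(θ). -/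

import Mathlib

open Finset Matrix

noncomputable section

variable {P : ℕ} {N : Fin P → ℕ}

/-- Factor sum `λ_p = Σ_j a_p(j)`. -/
def lam1 (a : (p : Fin P) → Fin (N p) → ℝ) (p : Fin P) : ℝ :=
  ∑ j, a p j

/-- Index set of the parameter vector `θ`: a pair of a mode `p` and a coordinate of
`a_p`; its cardinality is `Σ_p N_p`. -/
abbrev FullIdx (N : Fin P → ℕ) := (p : Fin P) × Fin (N p)

/-- **Expected Fisher information matrix of the rank-one PCP model**: the symmetric
`(Σ_p N_p) × (Σ_p N_p)` block matrix whose `(p,p)` diagonal block has `(i,j)` entry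
`[i = j] · λ/(λ_p a_p(i))` and whose `(p,q)` off-diagonal block (`p ≠ q`) has every
entry equal to `λ/(λ_p λ_q)`, where `λ = λ_1 ⋯ λ_P`. -/
def fim (a : (p : Fin P) → Fin (N p) → ℝ) : Matrix (FullIdx N) (FullIdx N) ℝ :=
  fun x y =>
    if x = y then (∏ p, lam1 a p) / (lam1 a x.1 * a x.1 x.2)
    else if x.1 = y.1 then 0
    else (∏ p, lam1 a p) / (lam1 a x.1 * lam1 a y.1)

/-- Retained indices: all coordinates of `a_1`, and all but the first coordinate of
each `a_p` for `p ∈ {2,…,P}`. -/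
abbrev RetIdx (N : Fin P → ℕ) := {x : FullIdx N // (x.1 : ℕ) = 0 ∨ (x.2 : ℕ) ≠ 0}

/-- Deleted indices: the first coordinate of each `a_p` for `p ∈ {2,…,P}`. -/
abbrev DelIdx (N : Fin P → ℕ) := {x : FullIdx N // ¬((x.1 : ℕ) = 0 ∨ (x.2 : ℕ) ≠ 0)}

/-- `I_F`: the principal submatrix of `I(θ)` on the retained indices. -/
def fimF (a : (p : Fin P) → Fin (N p) → ℝ) : Matrix (RetIdx N) (RetIdx N) ℝ :=
  fun x y => fim a x.1 y.1

/-- `I_{F,N}`: the deleted rows of `I(θ)` restricted to the retained columns. -/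
def fimFN (a : (p : Fin P) → Fin (N p) → ℝ) : Matrix (DelIdx N) (RetIdx N) ℝ :=
  fun x y => fim a x.1 y.1

/-- `I_N`: the principal submatrix of `I(θ)` on the deleted indices. -/
def fimN (a : (p : Fin P) → Fin (N p) → ℝ) : Matrix (DelIdx N) (DelIdx N) ℝ :=
  fun x y => fim a x.1 y.1

/-- The matrix `H = [−I_F⁻¹ I_{F,N}ᵀ ; Id_{P−1}]`, indexed by all parameter
coordinates (rows) and the deleted coordinates (columns). -/
def Hmat (a : (p : Fin P) → Fin (N p) → ℝ) : Matrix (FullIdx N) (DelIdx N) ℝ :=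
  fun x d =>
    if h : (x.1 : ℕ) = 0 ∨ (x.2 : ℕ) ≠ 0 then -(((fimF a)⁻¹ * (fimFN a)ᵀ) ⟨x, h⟩ d)
    else if x = d.1 then 1 else 0

section aux
variable (a : (p : Fin P) → Fin (N p) → ℝ)

lemma div_cancel_helper (X Y b c' : ℝ) (hb : b ≠ 0) :
    X / (Y * b) * (c' * b) = X / Y * c' := by
  calc X / (Y * b) * (c' * b) = X * c' * b / (Y * b) := by ring
    _ = X * c' / Y := mul_div_mul_right _ _ hb
    _ = X / Y * c' := by ring

lemma fim_mulVec (x : FullIdx N → ℝ) (p : Fin P) (i : Fin (N p)) :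
    (fim a *ᵥ x) ⟨p, i⟩ =
      (∏ r, lam1 a r) / (lam1 a p * a p i) * x ⟨p, i⟩ +
      ∑ q ∈ Finset.univ.erase p,
        (∏ r, lam1 a r) / (lam1 a p * lam1 a q) * ∑ j, x ⟨q, j⟩ := by
  have h0 : (fim a *ᵥ x) ⟨p, i⟩ = ∑ q, ∑ j, fim a ⟨p, i⟩ ⟨q, j⟩ * x ⟨q, j⟩ := by
    rw [mulVec, dotProduct, ← Finset.univ_sigma_univ, Finset.sum_sigma]
  rw [h0]
  have h1 : ∀ q, ∑ j, fim a ⟨p, i⟩ ⟨q, j⟩ * x ⟨q, j⟩ =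
      if q = p then (∏ r, lam1 a r) / (lam1 a p * a p i) * x ⟨p, i⟩
      else (∏ r, lam1 a r) / (lam1 a p * lam1 a q) * ∑ j, x ⟨q, j⟩ := by
    intro q
    by_cases hq : q = p
    · subst hq
      simp only [if_pos rfl]
      have : ∀ j : Fin (N q), fim a ⟨q, i⟩ ⟨q, j⟩ * x ⟨q, j⟩ =
          if i = j then (∏ r, lam1 a r) / (lam1 a q * a q i) * x ⟨q, j⟩ else 0 := by
        intro j
        simp only [fim, Sigma.mk.inj_iff, heq_eq_eq, true_and]
        by_cases hij : i = j
        · simp [hij]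
        · simp [hij]
      rw [Finset.sum_congr rfl fun j _ => this j, Finset.sum_ite_eq _ i]
      simp
    · simp only [if_neg hq]
      have : ∀ j : Fin (N q), fim a ⟨p, i⟩ ⟨q, j⟩ * x ⟨q, j⟩ =
          (∏ r, lam1 a r) / (lam1 a p * lam1 a q) * x ⟨q, j⟩ := by
        intro j
        have hne : (⟨p, i⟩ : FullIdx N) ≠ ⟨q, j⟩ := by
          intro h; exact hq (congrArg Sigma.fst h).symm
        have hne2 : p ≠ q := fun h => hq h.symm
        simp [fim, hne, hne2]
      rw [Finset.sum_congr rfl fun j _ => this j, ← Finset.mul_sum]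
  rw [Finset.sum_congr rfl fun q _ => h1 q,
    ← Finset.add_sum_erase _ _ (Finset.mem_univ p), if_pos rfl]
  congr 1
  exact Finset.sum_congr rfl fun q hq => if_neg (Finset.ne_of_mem_erase hq)


lemma lam1_pos (hN : ∀ p, 1 ≤ N p) (ha : ∀ p j, 0 < a p j) (p : Fin P) :
    0 < lam1 a p := by
  haveI : Nonempty (Fin (N p)) := ⟨⟨0, hN p⟩⟩
  exact Finset.sum_pos (fun j _ => ha p j) Finset.univ_nonempty

lemma mulVec_comb (hN : ∀ p, 1 ≤ N p) (ha : ∀ p j, 0 < a p j)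
    (c : Fin P → ℝ) (hc : ∑ p, c p = 0) :
    fim a *ᵥ (fun u => c u.1 * a u.1 u.2) = 0 := by
  funext u
  obtain ⟨p, i⟩ := u
  rw [fim_mulVec]
  have hap : a p i ≠ 0 := (ha p i).ne'
  have hlp : ∀ q, lam1 a q ≠ 0 := fun q => (lam1_pos a hN ha q).ne'
  have h1 : (∏ r, lam1 a r) / (lam1 a p * a p i) * (c p * a p i)
      = (∏ r, lam1 a r) / lam1 a p * c p :=
    div_cancel_helper _ _ _ _ hap
  have h2 : ∀ q, (∏ r, lam1 a r) / (lam1 a p * lam1 a q) * ∑ j, c q * a q j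
      = (∏ r, lam1 a r) / lam1 a p * c q := by
    intro q
    have : ∑ j, c q * a q j = c q * lam1 a q := by rw [← Finset.mul_sum]; rfl
    rw [this]
    exact div_cancel_helper _ _ _ _ (hlp q)
  show (∏ r, lam1 a r) / (lam1 a p * a p i) * (c p * a p i)
      + ∑ q ∈ Finset.univ.erase p, (∏ r, lam1 a r) / (lam1 a p * lam1 a q)
        * ∑ j, c q * a q j = 0
  rw [h1, Finset.sum_congr rfl fun q _ => h2 q, ← Finset.mul_sum, ← mul_add,
    Finset.add_sum_erase _ c (Finset.mem_univ p), hc, mul_zero]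

lemma ker_char (hN : ∀ p, 1 ≤ N p) (ha : ∀ p j, 0 < a p j)
    (x : FullIdx N → ℝ) (hx : fim a *ᵥ x = 0) :
    ∃ c : Fin P → ℝ, ∑ p, c p = 0 ∧ ∀ p i, x ⟨p, i⟩ = c p * a p i := by
  have hL : (∏ r, lam1 a r) ≠ 0 :=
    Finset.prod_ne_zero_iff.2 fun q _ => (lam1_pos a hN ha q).ne'
  have hlp : ∀ q, lam1 a q ≠ 0 := fun q => (lam1_pos a hN ha q).ne'
  set L := ∏ r, lam1 a r with hLdef
  set s : Fin P → ℝ := fun q => ∑ j, x ⟨q, j⟩ with hs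
  set T : ℝ := ∑ q, s q / lam1 a q with hT
  have hrow : ∀ p i, L / (lam1 a p * a p i) * x ⟨p, i⟩
      + L / lam1 a p * (T - s p / lam1 a p) = 0 := by
    intro p i
    have h := congrFun hx ⟨p, i⟩
    rw [fim_mulVec] at h
    have h2 : ∀ q ∈ Finset.univ.erase p,
        L / (lam1 a p * lam1 a q) * ∑ j, x ⟨q, j⟩
        = L / lam1 a p * (s q / lam1 a q) := by
      intro q _
      rw [div_mul_eq_mul_div, mul_comm (lam1 a p) (lam1 a q), ← div_div,
        div_mul_eq_mul_div, mul_div_assoc (∏ r, lam1 a r), mul_comm, mul_div_assoc]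
    rw [Finset.sum_congr rfl h2, ← Finset.mul_sum] at h
    have h3 : ∑ q ∈ Finset.univ.erase p, s q / lam1 a q = T - s p / lam1 a p := by
      rw [hT, ← Finset.add_sum_erase _ (fun q => s q / lam1 a q) (Finset.mem_univ p)]
      ring
    rw [h3] at h
    exact h
  have hx' : ∀ p i, x ⟨p, i⟩ = (s p / lam1 a p - T) * a p i := by
    intro p i
    have h := hrow p i
    have hap : a p i ≠ 0 := (ha p i).ne'
    have hA : L / (lam1 a p * a p i) ≠ 0 := div_ne_zero hL (mul_ne_zero (hlp p) hap)
    apply mul_left_cancel₀ hA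
    have heq : L / (lam1 a p * a p i) * ((s p / lam1 a p - T) * a p i)
        = -(L / lam1 a p * (T - s p / lam1 a p)) := by
      rw [div_cancel_helper _ _ _ _ hap]
      ring
    rw [heq]
    linarith
  have hsc : ∀ p, s p = (s p / lam1 a p - T) * lam1 a p := by
    intro p
    rw [hs]
    calc ∑ j, x ⟨p, j⟩ = ∑ j : Fin (N p), (s p / lam1 a p - T) * a p j :=
          Finset.sum_congr rfl fun j _ => hx' p j
      _ = (s p / lam1 a p - T) * lam1 a p := by rw [← Finset.mul_sum]; rfl
  have hT0 : T = 0 := by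
    rcases Nat.eq_zero_or_pos P with hP0 | hP0
    · rw [hT]
      apply Finset.sum_eq_zero
      intro q _
      have := q.isLt
      omega
    · have h := hsc ⟨0, hP0⟩
      rw [sub_mul, div_mul_cancel₀ _ (hlp ⟨0, hP0⟩)] at h
      have h2 : T * lam1 a ⟨0, hP0⟩ = 0 := by linarith
      rcases mul_eq_zero.mp h2 with h' | h'
      · exact h'
      · exact absurd h' (hlp ⟨0, hP0⟩)
  refine ⟨fun p => s p / lam1 a p, by rw [← hT]; exact hT0, fun p i => ?_⟩
  rw [hx' p i, hT0, sub_zero]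
end aux

section main
variable (a : (p : Fin P) → Fin (N p) → ℝ)

lemma fim_symm (u v : FullIdx N) : fim a u v = fim a v u := by
  by_cases h : u = v
  · rw [h]
  · simp only [fim]
    rw [if_neg h, if_neg (Ne.symm h)]
    by_cases h2 : u.1 = v.1
    · rw [if_pos h2, if_pos h2.symm]
    · rw [if_neg h2, if_neg (Ne.symm h2), mul_comm]

/-- coefficient vector of the kernel column associated to a deleted index -/
def cvec (d : DelIdx N) (q : Fin P) : ℝ :=
  (if q = d.1.1 then 1 else if (q : ℕ) = 0 then -1 else 0) / a d.1.1 d.1.2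

/-- the explicit kernel matrix -/
def Wmat : Matrix (FullIdx N) (DelIdx N) ℝ := fun u d => cvec a d u.1 * a u.1 u.2

lemma del_prop (d : DelIdx N) : (d.1.1 : ℕ) ≠ 0 ∧ (d.1.2 : ℕ) = 0 := by
  have h := d.2; push_neg at h; exact h

lemma cvec_sum (d : DelIdx N) : ∑ q, cvec a d q = 0 := by
  have hP0 : 0 < P := d.1.1.pos
  have hd1 : (d.1.1 : ℕ) ≠ 0 := (del_prop d).1
  simp only [cvec, ← Finset.sum_div]
  have hz : ∀ q : Fin P, ((q : ℕ) = 0) ↔ q = ⟨0, hP0⟩ := by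
    intro q; constructor
    · intro h; exact Fin.ext h
    · intro h; rw [h]
  have hd3 : ¬(d.1.1 = ⟨0, hP0⟩) := fun h => hd1 (by rw [h])
  have hd4 : ¬((⟨0, hP0⟩ : Fin P) = d.1.1) := fun h => hd3 h.symm
  have : ∀ q : Fin P, (if q = d.1.1 then (1 : ℝ) else if (q : ℕ) = 0 then -1 else 0)
      = (if q = d.1.1 then (1 : ℝ) else 0) + (if q = ⟨0, hP0⟩ then (-1 : ℝ) else 0) := by
    intro q
    by_cases h1 : q = d.1.1
    · rw [if_pos h1, if_pos h1, if_neg (h1 ▸ hd3), add_zero]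
    · by_cases h2 : q = ⟨0, hP0⟩
      · simp [h1, h2, (hz q).2 h2, hd4]
      · have h3 : ¬((q : ℕ) = 0) := fun h => h2 ((hz q).1 h)
        simp [h1, h2, h3]
  rw [Finset.sum_congr rfl fun q _ => this q, Finset.sum_add_distrib]
  simp

lemma W_ker (hN : ∀ p, 1 ≤ N p) (ha : ∀ p j, 0 < a p j) (d : DelIdx N) :
    fim a *ᵥ (fun u => Wmat a u d) = 0 :=
  mulVec_comb a hN ha (cvec a d) (cvec_sum a d)

lemma W_del (ha : ∀ p j, 0 < a p j) (e d : DelIdx N) :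
    Wmat a e.1 d = if e = d then 1 else 0 := by
  obtain ⟨he1, he2⟩ := del_prop e
  obtain ⟨hd1, hd2⟩ := del_prop d
  by_cases hpp : e.1.1 = d.1.1
  · have hed : e = d := by
      apply Subtype.ext
      obtain ⟨⟨p, i⟩, hp⟩ := e
      obtain ⟨⟨p', i'⟩, hp'⟩ := d
      simp only at hpp he2 hd2
      subst hpp
      have : i = i' := Fin.ext (by rw [he2, hd2])
      subst this
      rfl
    rw [if_pos hed, hed, Wmat, cvec, if_pos rfl, one_div]
    exact inv_mul_cancel₀ (ha d.1.1 d.1.2).ne'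
  · have hed : e ≠ d := fun h => hpp (by rw [h])
    rw [if_neg hed, Wmat, cvec, if_neg hpp, if_neg he1]
    simp

lemma key_sum (hN : ∀ p, 1 ≤ N p) (ha : ∀ p j, 0 < a p j) (u : FullIdx N) (d : DelIdx N) :
    (∑ y : RetIdx N, fim a u y.1 * Wmat a y.1 d) + fim a u d.1 = 0 := by
  have h0 := congrFun (W_ker a hN ha d) u
  have hsplit := Fintype.sum_subtype_add_sum_subtype
    (fun x : FullIdx N => (x.1 : ℕ) = 0 ∨ (x.2 : ℕ) ≠ 0)
    (fun y => fim a u y * Wmat a y d)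
  have h1 : (fim a *ᵥ fun u => Wmat a u d) u = ∑ y : FullIdx N, fim a u y * Wmat a y d := rfl
  rw [h0] at h1
  have h2 : ∑ y : DelIdx N, fim a u y.1 * Wmat a y.1 d = fim a u d.1 := by
    have : ∀ y : DelIdx N, fim a u y.1 * Wmat a y.1 d
        = if y = d then fim a u y.1 else 0 := by
      intro y
      rw [W_del a ha]
      by_cases h : y = d <;> simp [h]
    rw [Finset.sum_congr rfl fun y _ => this y, Finset.sum_ite_eq' _ d]
    simp
  rw [← h2, hsplit, ← h1]
  rfl

end main

section main2
variable (a : (p : Fin P) → Fin (N p) → ℝ)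

lemma x_formula (hN : ∀ p, 1 ≤ N p) (ha : ∀ p j, 0 < a p j)
    (x : FullIdx N → ℝ) (p : Fin P) (i : Fin (N p))
    (h0 : (fim a *ᵥ x) ⟨p, i⟩ = 0) :
    x ⟨p, i⟩ = ((∑ j, x ⟨p, j⟩) / lam1 a p
      - ∑ q, (∑ j, x ⟨q, j⟩) / lam1 a q) * a p i := by
  have hL : (∏ r, lam1 a r) ≠ 0 :=
    Finset.prod_ne_zero_iff.2 fun q _ => (lam1_pos a hN ha q).ne'
  have hlp : ∀ q, lam1 a q ≠ 0 := fun q => (lam1_pos a hN ha q).ne'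
  set L := ∏ r, lam1 a r with hLdef
  set s : Fin P → ℝ := fun q => ∑ j, x ⟨q, j⟩ with hs
  set T : ℝ := ∑ q, s q / lam1 a q with hT
  have h := h0
  rw [fim_mulVec] at h
  have h2 : ∀ q ∈ Finset.univ.erase p,
      L / (lam1 a p * lam1 a q) * ∑ j, x ⟨q, j⟩
      = L / lam1 a p * (s q / lam1 a q) := by
    intro q _
    rw [div_mul_eq_mul_div, mul_comm (lam1 a p) (lam1 a q), ← div_div,
      div_mul_eq_mul_div, mul_div_assoc L, mul_comm, mul_div_assoc]
  rw [Finset.sum_congr rfl h2, ← Finset.mul_sum] at h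
  have h3 : ∑ q ∈ Finset.univ.erase p, s q / lam1 a q = T - s p / lam1 a p := by
    rw [hT, ← Finset.add_sum_erase _ (fun q => s q / lam1 a q) (Finset.mem_univ p)]
    ring
  rw [h3] at h
  have hap : a p i ≠ 0 := (ha p i).ne'
  have hA : L / (lam1 a p * a p i) ≠ 0 := div_ne_zero hL (mul_ne_zero (hlp p) hap)
  apply mul_left_cancel₀ hA
  have heq : L / (lam1 a p * a p i) * ((s p / lam1 a p - T) * a p i)
      = -(L / lam1 a p * (T - s p / lam1 a p)) := by
    rw [div_cancel_helper _ _ _ _ hap]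
    ring
  rw [heq]
  linarith

lemma fimF_inj (hN : ∀ p, 1 ≤ N p) (ha : ∀ p j, 0 < a p j)
    (v : RetIdx N → ℝ) (hv : fimF a *ᵥ v = 0) : v = 0 := by
  rcases Nat.eq_zero_or_pos P with hP0 | hP0
  · funext y
    have := y.1.1.isLt
    omega
  classical
  set x : FullIdx N → ℝ := fun u =>
    if h : (u.1 : ℕ) = 0 ∨ (u.2 : ℕ) ≠ 0 then v ⟨u, h⟩ else 0 with hxdef
  have hlp : ∀ q, lam1 a q ≠ 0 := fun q => (lam1_pos a hN ha q).ne'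
  set s : Fin P → ℝ := fun q => ∑ j, x ⟨q, j⟩ with hs
  set T : ℝ := ∑ q, s q / lam1 a q with hT
  have hfx : ∀ (u : FullIdx N), ((u.1 : ℕ) = 0 ∨ (u.2 : ℕ) ≠ 0) →
      (fim a *ᵥ x) u = 0 := by
    intro u h
    have hsplit := Fintype.sum_subtype_add_sum_subtype
      (fun y : FullIdx N => (y.1 : ℕ) = 0 ∨ (y.2 : ℕ) ≠ 0)
      (fun y => fim a u y * x y)
    have h1 : (fim a *ᵥ x) u = ∑ y : FullIdx N, fim a u y * x y := rfl
    have h2 : ∀ y : RetIdx N, fim a u y.1 * x y.1 = fim a u y.1 * v y := by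
      intro y
      congr 1
      rw [hxdef]
      exact dif_pos y.2
    have h3 : ∀ y : DelIdx N, fim a u y.1 * x y.1 = 0 := by
      intro y
      rw [hxdef]
      simp only [dif_neg y.2, mul_zero]
    rw [h1, ← hsplit, Finset.sum_congr rfl (fun y _ => h2 y),
      Finset.sum_congr rfl (fun y _ => h3 y), Finset.sum_const_zero, add_zero]
    exact congrFun hv ⟨u, h⟩
  have hrow : ∀ (p : Fin P) (i : Fin (N p)), ((p : ℕ) = 0 ∨ (i : ℕ) ≠ 0) →
      x ⟨p, i⟩ = (s p / lam1 a p - T) * a p i := fun p i h =>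
    x_formula a hN ha x p i (hfx ⟨p, i⟩ h)
  -- sums of x over each factor
  have hs0 : ∀ p : Fin P, (p : ℕ) = 0 → s p = (s p / lam1 a p - T) * lam1 a p := by
    intro p hp
    have : ∀ j : Fin (N p), x ⟨p, j⟩ = (s p / lam1 a p - T) * a p j :=
      fun j => hrow p j (Or.inl hp)
    calc s p = ∑ j : Fin (N p), (s p / lam1 a p - T) * a p j :=
          Finset.sum_congr rfl fun j _ => this j
      _ = (s p / lam1 a p - T) * lam1 a p := by rw [← Finset.mul_sum]; rfl
  have hT0 : T = 0 := by
    have h := hs0 ⟨0, hP0⟩ rfl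
    rw [sub_mul, div_mul_cancel₀ _ (hlp ⟨0, hP0⟩)] at h
    have h2 : T * lam1 a ⟨0, hP0⟩ = 0 := by linarith
    rcases mul_eq_zero.mp h2 with h' | h'
    · exact h'
    · exact absurd h' (hlp ⟨0, hP0⟩)
  have hsn : ∀ p : Fin P, (p : ℕ) ≠ 0 → s p = 0 := by
    intro p hp
    set j0 : Fin (N p) := ⟨0, hN p⟩ with hj0
    have hxj : ∀ j : Fin (N p), x ⟨p, j⟩
        = s p / lam1 a p * a p j - (if j = j0 then s p / lam1 a p * a p j0 else 0) := by
      intro j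
      by_cases hj : j = j0
      · subst hj
        rw [if_pos rfl, sub_self, hxdef]
        refine dif_neg ?_
        push_neg
        exact ⟨hp, rfl⟩
      · have hjv : (j : ℕ) ≠ 0 := fun h => hj (Fin.ext h)
        rw [if_neg hj, sub_zero, hrow p j (Or.inr hjv), hT0, sub_zero]
    have hsum : s p = s p / lam1 a p * lam1 a p - s p / lam1 a p * a p j0 := by
      calc s p = ∑ j : Fin (N p), (s p / lam1 a p * a p j
            - (if j = j0 then s p / lam1 a p * a p j0 else 0)) :=
            Finset.sum_congr rfl fun j _ => hxj j
        _ = (∑ j : Fin (N p), s p / lam1 a p * a p j)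
            - ∑ j : Fin (N p), (if j = j0 then s p / lam1 a p * a p j0 else 0) :=
            Finset.sum_sub_distrib _ _
        _ = s p / lam1 a p * lam1 a p - s p / lam1 a p * a p j0 := by
            rw [← Finset.mul_sum, Finset.sum_ite_eq' _ j0]
            simp only [Finset.mem_univ, if_true]
            rfl
    rw [div_mul_cancel₀ _ (hlp p)] at hsum
    have h2 : s p / lam1 a p * a p j0 = 0 := by linarith
    rcases mul_eq_zero.mp h2 with h' | h'
    · rcases div_eq_zero_iff.mp h' with h'' | h''
      · exact h''
      · exact absurd h'' (hlp p)
    · exact absurd h' (ha p j0).ne'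
  have hsall : ∀ p : Fin P, s p = 0 := by
    intro p
    by_cases hp : (p : ℕ) = 0
    · have hpp : p = ⟨0, hP0⟩ := Fin.ext hp
      have h := hT0
      rw [hT] at h
      rw [Finset.sum_eq_single p (fun q _ hq => ?_) (fun h' => absurd (Finset.mem_univ p) h')] at h
      · rcases div_eq_zero_iff.mp h with h'' | h''
        · exact h''
        · exact absurd h'' (hlp p)
      · have hqv : (q : ℕ) ≠ 0 := by
          intro h0
          exact hq (Fin.ext (by rw [h0, hp]))
        rw [hsn q hqv, zero_div]
    · exact hsn p hp
  funext y
  have h := hrow y.1.1 y.1.2 y.2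
  rw [hsall, zero_div, hT0, sub_zero, zero_mul] at h
  have hx : x y.1 = v y := by
    rw [hxdef]
    exact dif_pos y.2
  show v y = 0
  rw [← hx]
  exact h

end main2

section main3
variable (a : (p : Fin P) → Fin (N p) → ℝ)

def WF : Matrix (RetIdx N) (DelIdx N) ℝ := fun y d => Wmat a y.1 d

lemma fimF_det (hN : ∀ p, 1 ≤ N p) (ha : ∀ p j, 0 < a p j) :
    IsUnit (fimF a).det := by
  classical
  rw [isUnit_iff_ne_zero]
  intro hdet
  obtain ⟨v, hv0, hv⟩ := (Matrix.exists_mulVec_eq_zero_iff).2 hdet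
  exact hv0 (fimF_inj a hN ha v hv)

lemma K1 (hN : ∀ p, 1 ≤ N p) (ha : ∀ p j, 0 < a p j) :
    fimF a * WF a = -(fimFN a)ᵀ := by
  ext x d
  have h := key_sum a hN ha x.1 d
  have h1 : (fimF a * WF a) x d = ∑ y : RetIdx N, fim a x.1 y.1 * Wmat a y.1 d := by
    simp [Matrix.mul_apply, fimF, WF]
  rw [h1]
  have h2 : (-(fimFN a)ᵀ) x d = -(fim a d.1 x.1) := rfl
  rw [h2, fim_symm a d.1 x.1]
  linarith

lemma WF_eq (hN : ∀ p, 1 ≤ N p) (ha : ∀ p j, 0 < a p j) :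
    WF a = -((fimF a)⁻¹ * (fimFN a)ᵀ) := by
  classical
  have hdet := fimF_det a hN ha
  calc WF a = ((fimF a)⁻¹ * fimF a) * WF a := by
        rw [Matrix.nonsing_inv_mul _ hdet, Matrix.one_mul]
    _ = (fimF a)⁻¹ * (fimF a * WF a) := Matrix.mul_assoc _ _ _
    _ = -((fimF a)⁻¹ * (fimFN a)ᵀ) := by rw [K1 a hN ha, Matrix.mul_neg]

lemma H_eq_W (hN : ∀ p, 1 ≤ N p) (ha : ∀ p j, 0 < a p j) :
    Hmat a = Wmat a := by
  classical
  funext u d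
  rw [Hmat]
  by_cases h : (u.1 : ℕ) = 0 ∨ (u.2 : ℕ) ≠ 0
  · rw [dif_pos h]
    exact (congrFun (congrFun (WF_eq a hN ha) ⟨u, h⟩) d).symm
  · rw [dif_neg h]
    rw [show Wmat a u d = _ from W_del a ha ⟨u, h⟩ d]
    simp only [Subtype.ext_iff]

end main3


/-- **Null space of the expected Fisher information matrix.** Partitioning `I(θ)` into
the blocks `I_F`, `I_{F,N}` and `I_N` on retained/deleted indices, the Schur
complement vanishes: `I_N − I_{F,N} I_F⁻¹ I_{F,N}ᵀ = 0`; consequently `I(θ) H = 0`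
for `H = [−I_F⁻¹ I_{F,N}ᵀ ; Id_{P−1}]`, and the `P − 1` columns of `H` are linearly
independent and span (form a basis of) the null space of `I(θ)`. -/
theorem stmt_19 (P : ℕ) (hP : 2 ≤ P) (N : Fin P → ℕ) (hN : ∀ p, 1 ≤ N p)
    (a : (p : Fin P) → Fin (N p) → ℝ) (ha : ∀ p j, 0 < a p j) :
    Fintype.card (DelIdx N) = P - 1 ∧
    fimN a - fimFN a * (fimF a)⁻¹ * (fimFN a)ᵀ = 0 ∧
    fim a * Hmat a = 0 ∧
    LinearIndependent ℝ (fun d : DelIdx N => fun x : FullIdx N => Hmat a x d) ∧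
    Submodule.span ℝ (Set.range (fun d : DelIdx N => fun x : FullIdx N => Hmat a x d)) =
      LinearMap.ker (fim a).mulVecLin := by
  classical
  have hW := H_eq_W a hN ha
  have hP0 : 0 < P := by omega
  refine ⟨?_, ?_, ?_, ?_, ?_⟩
  · -- cardinality
    have e : DelIdx N ≃ {p : Fin P // (p : ℕ) ≠ 0} :=
      { toFun := fun d => ⟨d.1.1, (del_prop d).1⟩
        invFun := fun p => ⟨⟨p.1, ⟨0, hN p.1⟩⟩, by push_neg; exact ⟨p.2, rfl⟩⟩
        left_inv := fun d => by
          apply Subtype.ext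
          obtain ⟨⟨p, i⟩, hp⟩ := d
          have h2 : (i : ℕ) = 0 := (del_prop ⟨⟨p, i⟩, hp⟩).2
          show (⟨p, ⟨0, hN p⟩⟩ : FullIdx N) = ⟨p, i⟩
          congr 1
          exact Fin.ext h2.symm
        right_inv := fun p => rfl }
    have h1 : Fintype.card {p : Fin P // (p : ℕ) = 0} = 1 :=
      Fintype.card_eq_one_iff.2 ⟨⟨⟨0, hP0⟩, rfl⟩, fun y => Subtype.ext (Fin.ext y.2)⟩
    rw [Fintype.card_congr e, Fintype.card_subtype_compl, h1, Fintype.card_fin]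
  · -- Schur complement
    rw [Matrix.mul_assoc,
      show (fimF a)⁻¹ * (fimFN a)ᵀ = -(WF a) by rw [WF_eq a hN ha, neg_neg],
      Matrix.mul_neg, sub_neg_eq_add]
    ext e d
    have h := key_sum a hN ha e.1 d
    have h1 : (fimFN a * WF a) e d = ∑ y : RetIdx N, fim a e.1 y.1 * Wmat a y.1 d := by
      simp [Matrix.mul_apply, fimFN, WF]
    rw [Matrix.add_apply, Matrix.zero_apply, h1, fimN]
    linarith
  · -- fim * H = 0
    rw [hW]
    ext u d
    have h := congrFun (W_ker a hN ha d) u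
    rw [Matrix.mul_apply, Matrix.zero_apply]
    exact h
  · -- linear independence
    rw [hW, Fintype.linearIndependent_iff]
    intro g hg d
    have h := congrFun hg d.1
    simp only [Finset.sum_apply, Pi.smul_apply, smul_eq_mul, Pi.zero_apply] at h
    have h2 : ∀ e : DelIdx N, g e * Wmat a d.1 e = if d = e then g e else 0 := by
      intro e
      rw [W_del a ha d e]
      by_cases hh : d = e <;> simp [hh]
    rw [Finset.sum_congr rfl fun e _ => h2 e, Finset.sum_ite_eq _ d] at h
    simpa using h
  · -- span = kernel
    rw [hW]
    apply le_antisymm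
    · rw [Submodule.span_le]
      rintro _ ⟨d, rfl⟩
      rw [SetLike.mem_coe, LinearMap.mem_ker, Matrix.mulVecLin_apply]
      exact W_ker a hN ha d
    · intro x hx
      rw [LinearMap.mem_ker] at hx
      have hcol : ∀ d : DelIdx N, (fun u => Wmat a u d) ∈ Submodule.span ℝ
          (Set.range fun d : DelIdx N => fun u : FullIdx N => Wmat a u d) :=
        fun d => Submodule.subset_span ⟨d, rfl⟩
      have hyeq : (fun u => x u - ∑ d : DelIdx N, x d.1 * Wmat a u d)
          = x - ∑ d : DelIdx N, x d.1 • (fun u => Wmat a u d) := by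
        funext u
        simp [Finset.sum_apply, Pi.smul_apply, smul_eq_mul]
      have hz : ∀ d : DelIdx N, (fim a).mulVecLin (fun u => Wmat a u d) = 0 := fun d => by
        rw [Matrix.mulVecLin_apply]; exact W_ker a hN ha d
      have hyker : fim a *ᵥ (fun u => x u - ∑ d : DelIdx N, x d.1 * Wmat a u d) = 0 := by
        rw [← Matrix.mulVecLin_apply, hyeq, map_sub, map_sum, hx]
        simp [hz]
      have hydel : ∀ d : DelIdx N, x d.1 - ∑ e : DelIdx N, x e.1 * Wmat a d.1 e = 0 := by
        intro d
        have h2 : ∀ e : DelIdx N, x e.1 * Wmat a d.1 e = if d = e then x e.1 else 0 := by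
          intro e
          rw [W_del a ha d e]
          by_cases hh : d = e <;> simp [hh]
        rw [Finset.sum_congr rfl fun e _ => h2 e, Finset.sum_ite_eq _ d]
        simp
      obtain ⟨c, hc0, hcx⟩ := ker_char a hN ha _ hyker
      have hcp : ∀ p : Fin P, (p : ℕ) ≠ 0 → c p = 0 := by
        intro p hp
        have h := hcx p ⟨0, hN p⟩
        rw [hydel ⟨⟨p, ⟨0, hN p⟩⟩, by push_neg; exact ⟨hp, rfl⟩⟩] at h
        rcases mul_eq_zero.mp h.symm with h' | h'
        · exact h'
        · exact absurd h' (ha p _).ne'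
      have hcall : ∀ p, c p = 0 := by
        intro p
        by_cases hp : (p : ℕ) = 0
        · rw [Finset.sum_eq_single p
            (fun q _ hq => hcp q fun h0 => hq (Fin.ext (by rw [h0, hp])))
            (fun h' => absurd (Finset.mem_univ p) h')] at hc0
          exact hc0
        · exact hcp p hp
      have hfun : (fun u => x u - ∑ d : DelIdx N, x d.1 * Wmat a u d) = 0 := by
        funext u
        obtain ⟨p, i⟩ := u
        have h := hcx p i
        rw [hcall, zero_mul] at h
        exact h
      have hxeq : x = ∑ d : DelIdx N, x d.1 • (fun u => Wmat a u d) := by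
        have h3 := hfun
        rw [hyeq] at h3
        exact sub_eq_zero.mp h3
      rw [hxeq]
      exact Submodule.sum_mem _ fun d _ => Submodule.smul_mem _ _ (hcol d)
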